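/- arXiv:2405.02981 — 2 statements merged into one kernel-verified Lean document; each statement's English description precedes it below -/
import Mathlib

section
/- Fix K ≥ 2, real d > 1, and set η = 1/(d^K + d^{-K}). Let ℓ ∈ {0,...,K-1} and let α_k ∈ {d·e^{2πik/K}, d^{-1}·e^{2πik/K}} for each k ≠ ℓ be chosen independently and uniformly at random, with α_ℓ = d^{-1}·e^{2πiℓ/K} fixed. Let X(z) = x_K ∏_k (z - α_k) with x_K = sqrt(η(K+1)/∏_k |α_k|). Then E[|X(d·e^{2πiℓ/K})|²] = η(K+1)(d - d^{-1})²·d^K·2^{-(K-1)}·∏_{k=1}^{K-1}(|1 - e^{2πik/K}|² + |d - d^{-1}e^{2πik/K}|²). -/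
open MeasureTheory ProbabilityTheory Complex Finset
open scoped ProbabilityTheory

lemma huff_integral_prod {Ω : Type*} [MeasureSpace Ω] [IsProbabilityMeasure (ℙ : Measure Ω)]
    {ι : Type*} (f : ι → Ω → ℝ)
    (hindep : iIndepFun f ℙ)
    (hmeas : ∀ i, Measurable (f i)) (hpos : ∀ i ω, 0 ≤ f i ω) (s : Finset ι) :
    ∫ ω, ∏ i ∈ s, f i ω = ∏ i ∈ s, ∫ ω, f i ω := by
  classical
  induction s using Finset.cons_induction with
  | empty => simp
  | cons i s hi ih =>
    rw [Finset.prod_cons, ← ih]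
    have hind : IndepFun (f i) (∏ j ∈ s, f j) ℙ :=
      (hindep.indepFun_finset_prod_of_notMem hmeas hi).symm
    have hprodmeas : Measurable (∏ j ∈ s, f j) := by
      rw [show (∏ j ∈ s, f j) = fun ω => ∏ j ∈ s, f j ω from funext fun ω => Finset.prod_apply ..]
      exact Finset.measurable_prod s (fun j _ => hmeas j)
    have hprodpos : 0 ≤ (∏ j ∈ s, f j) := by
      intro ω
      simp only [Finset.prod_apply]
      exact Finset.prod_nonneg fun j _ => hpos j ω
    have := hind.integral_mul_eq_mul_integral
      (hmeas i).aestronglyMeasurable hprodmeas.aestronglyMeasurable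
    calc ∫ ω, ∏ x ∈ Finset.cons i s hi, f x ω = ∫ ω, (f i * ∏ j ∈ s, f j) ω := by
          simp [Finset.prod_apply, Finset.prod_insert hi]
      _ = integral ℙ (f i) * integral ℙ (∏ j ∈ s, f j) := this
      _ = (∫ ω, f i ω) * ∫ ω, ∏ i ∈ s, f i ω := by
          congr 1
          exact congrArg (integral ℙ) (funext fun ω => Finset.prod_apply ..)

lemma huff_exp_mod (K n : ℕ) (hK : K ≠ 0) :
    Complex.exp (2 * Real.pi * Complex.I * ((n % K : ℕ) : ℂ) / K)
      = Complex.exp (2 * Real.pi * Complex.I * (n : ℂ) / K) := by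
  have hKC : (K : ℂ) ≠ 0 := Nat.cast_ne_zero.mpr hK
  have hn : (n : ℂ) = ((n % K : ℕ) : ℂ) + ((n / K : ℕ) : ℂ) * K := by
    rw [← Nat.cast_mul, ← Nat.cast_add, Nat.mod_add_div']
  rw [show 2 * Real.pi * Complex.I * (n : ℂ) / K
      = 2 * Real.pi * Complex.I * ((n % K : ℕ) : ℂ) / K
        + ((n / K : ℕ) : ℂ) * (2 * Real.pi * Complex.I) by
    field_simp [hn]; linear_combination hn]
  rw [Complex.exp_add, Complex.exp_nat_mul_two_pi_mul_I, mul_one]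

lemma huff_abs_exp (K n : ℕ) : ‖(Complex.exp (2 * Real.pi * Complex.I * (n : ℂ) / K))‖ = 1 := by
  rw [show 2 * Real.pi * Complex.I * (n : ℂ) / K = ((2 * Real.pi * n / K : ℝ) : ℂ) * Complex.I by
    push_cast; ring]
  exact Complex.norm_exp_ofReal_mul_I _

lemma huff_two_point_integral {Ω : Type*} [MeasureSpace Ω] [IsProbabilityMeasure (ℙ : Measure Ω)]
    (X : Ω → ℂ) (hX : Measurable X) (a b : ℂ) (g : ℂ → ℝ)
    (hvals : ∀ ω, X ω = a ∨ X ω = b)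
    (hp : (ℙ : Measure Ω) {ω | X ω = a} = 1 / 2) :
    ∫ ω, g (X ω) = (g a + g b) / 2 := by
  set A : Set Ω := {ω | X ω = a} with hA
  have hAm : MeasurableSet A := hX (measurableSet_singleton a)
  have hpt : ∀ ω, g (X ω) = A.indicator (fun _ => g a) ω + Aᶜ.indicator (fun _ => g b) ω := by
    intro ω
    by_cases h : ω ∈ A
    · rw [Set.indicator_of_mem h, Set.indicator_of_notMem (by simp [h]), add_zero,
        show X ω = a from h]
    · rw [Set.indicator_of_notMem h, Set.indicator_of_mem (by simpa using h), zero_add,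
        show X ω = b from (hvals ω).resolve_left h]
  rw [integral_congr_ae (Filter.Eventually.of_forall hpt),
    integral_add ((integrable_const _).indicator hAm) ((integrable_const _).indicator hAm.compl),
    integral_indicator_const _ hAm, integral_indicator_const _ hAm.compl,
    measureReal_def, measureReal_def, prob_compl_eq_one_sub hAm, hp]
  have h2 : (1 : ENNReal) - 1 / 2 = 1 / 2 := by
    rw [one_div, ENNReal.one_sub_inv_two]
  rw [h2]
  have h3 : ((1 : ENNReal) / 2).toReal = (1 : ℝ) / 2 := by
    simp [ENNReal.toReal_div]
  rw [h3, smul_eq_mul, smul_eq_mul]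
  ring

lemma huff_exp_add (K m n : ℕ) (hK : K ≠ 0) :
    Complex.exp (2 * Real.pi * Complex.I * ((m + n : ℕ) : ℂ) / K)
      = Complex.exp (2 * Real.pi * Complex.I * (m : ℂ) / K)
        * Complex.exp (2 * Real.pi * Complex.I * (n : ℂ) / K) := by
  rw [← Complex.exp_add]
  congr 1
  have hKC : (K : ℂ) ≠ 0 := Nat.cast_ne_zero.mpr hK
  push_cast
  field_simp

open scoped Fin.NatCast Fin.CommRing

theorem expected_sq_abs_huffman_eval_random_zeros
    {Ω : Type*} [MeasureSpace Ω] [IsProbabilityMeasure (ℙ : Measure Ω)]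
    (K : ℕ) (hK : 2 ≤ K) (d : ℝ) (hd : 1 < d)
    (η : ℝ) (hη : η = (d ^ K + d⁻¹ ^ K)⁻¹)
    (ℓ : Fin K) (α : Fin K → Ω → ℂ)
    (hmeas : ∀ k, Measurable (α k))
    (hαℓ : ∀ ω, α ℓ ω
      = (d⁻¹ : ℂ) * Complex.exp (2 * Real.pi * Complex.I * (ℓ : ℕ) / K))
    (hval : ∀ k : Fin K, k ≠ ℓ → ∀ ω,
      α k ω = (d : ℂ) * Complex.exp (2 * Real.pi * Complex.I * (k : ℕ) / K) ∨
      α k ω = (d⁻¹ : ℂ) * Complex.exp (2 * Real.pi * Complex.I * (k : ℕ) / K))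
    (hprob : ∀ k : Fin K, k ≠ ℓ →
      (ℙ : Measure Ω)
        {ω | α k ω = (d : ℂ) * Complex.exp (2 * Real.pi * Complex.I * (k : ℕ) / K)}
        = 1 / 2)
    (hindep : iIndepFun α
      (ℙ : Measure Ω)) :
    ∫ ω, (Real.sqrt (η * (K + 1) / ∏ k : Fin K, ‖α k ω‖)
        * ‖∏ k : Fin K,
            ((d : ℂ) * Complex.exp (2 * Real.pi * Complex.I * (ℓ : ℕ) / K) - α k ω)‖) ^ 2
        ∂(ℙ : Measure Ω)
      = η * (K + 1) * (d - d⁻¹) ^ 2 * d ^ K * (1 / 2 ^ (K - 1))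
          * ∏ k ∈ Finset.Ico 1 K,
              ((‖1 - Complex.exp (2 * Real.pi * Complex.I * k / K)‖) ^ 2
                + (‖(d : ℂ)
                    - (d⁻¹ : ℂ) * Complex.exp (2 * Real.pi * Complex.I * k / K)‖) ^ 2) := by
  classical
  have hK0 : K ≠ 0 := by omega
  haveI : NeZero K := ⟨hK0⟩
  have hd0 : (0 : ℝ) < d := lt_trans one_pos hd
  have hdi0 : (0 : ℝ) < d⁻¹ := inv_pos.mpr hd0
  have hdd : d⁻¹ < d := by
    have h1 : d⁻¹ < 1 := by rw [inv_lt_one_iff₀]; right; exact hd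
    linarith
  have hdC : (d : ℂ) ≠ 0 := by exact_mod_cast hd0.ne'
  have hdiC : ((d : ℂ))⁻¹ ≠ 0 := inv_ne_zero hdC
  have hη0 : 0 ≤ η := by rw [hη]; positivity
  have hc : 0 ≤ η * (K + 1) := by positivity
  set z : ℂ := (d : ℂ) * Complex.exp (2 * Real.pi * Complex.I * (ℓ : ℕ) / K) with hz
  set g : ℂ → ℝ := fun w => ‖(z - w)‖ ^ 2 / ‖w‖ with hgdef
  have hg_meas : Measurable g := by
    apply Measurable.div
    · exact ((continuous_norm.comp (continuous_const.sub continuous_id)).pow 2).measurable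
    · exact continuous_norm.measurable
  set f : Fin K → Ω → ℝ := fun k ω => g (α k ω) with hfdef
  have hfmeas : ∀ k, Measurable (f k) := fun k => hg_meas.comp (hmeas k)
  have hgnn : ∀ w, 0 ≤ g w := fun w => div_nonneg (sq_nonneg _) (norm_nonneg _)
  have hαne : ∀ k ω, α k ω ≠ 0 := by
    intro k ω
    by_cases hk : k = ℓ
    · subst hk; rw [hαℓ ω]; exact mul_ne_zero hdiC (Complex.exp_ne_zero _)
    · rcases hval k hk ω with h | h <;> rw [h]
      exacts [mul_ne_zero hdC (Complex.exp_ne_zero _), mul_ne_zero hdiC (Complex.exp_ne_zero _)]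
  have hP : ∀ ω, 0 < ∏ k : Fin K, ‖(α k ω)‖ :=
    fun ω => Finset.prod_pos fun k _ => norm_pos_iff.mpr (hαne k ω)
  have hpt : ∀ ω, (Real.sqrt (η * (K + 1) / ∏ k : Fin K, ‖(α k ω)‖)
        * ‖(∏ k : Fin K, (z - α k ω))‖) ^ 2
      = η * (K + 1) * ∏ k : Fin K, f k ω := by
    intro ω
    rw [mul_pow, Real.sq_sqrt (div_nonneg hc (hP ω).le), norm_prod, ← Finset.prod_pow]
    have h4 : ∏ k : Fin K, f k ω
        = (∏ k : Fin K, ‖(z - α k ω)‖ ^ 2) / ∏ k : Fin K, ‖(α k ω)‖ :=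
      Finset.prod_div_distrib ..
    rw [h4, div_mul_eq_mul_div, mul_div_assoc]
  rw [integral_congr_ae (Filter.Eventually.of_forall hpt), integral_const_mul,
    huff_integral_prod f (hindep.comp (fun _ => g) (fun _ => hg_meas)) hfmeas
      (fun k ω => hgnn _) univ]
  -- abbreviations
  have hEabs : ∀ n : ℕ,
      ‖(Complex.exp (2 * Real.pi * Complex.I * (n : ℂ) / K))‖ = 1 :=
    fun n => huff_abs_exp K n
  have hIl : ∫ ω, f ℓ ω = (d - d⁻¹) ^ 2 * d := by
    have hfl : ∀ ω, f ℓ ω = (d - d⁻¹) ^ 2 * d := by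
      intro ω
      simp only [hfdef, hgdef]
      rw [hαℓ ω]
      rw [show z - (↑d)⁻¹ * Complex.exp (2 * Real.pi * Complex.I * (ℓ : ℕ) / K)
          = ((d - d⁻¹ : ℝ) : ℂ) * Complex.exp (2 * Real.pi * Complex.I * (ℓ : ℕ) / K) by
        rw [hz]; push_cast; ring]
      rw [norm_mul, norm_mul, hEabs, mul_one, mul_one, Complex.norm_real, Real.norm_eq_abs,
        abs_of_pos (sub_pos.mpr hdd), norm_inv, Complex.norm_real, Real.norm_eq_abs, abs_of_pos hd0,
        div_eq_mul_inv, inv_inv]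
    rw [integral_congr_ae (Filter.Eventually.of_forall hfl)]
    simp
  have hIk : ∀ k : Fin K, k ≠ ℓ → ∫ ω, f k ω
      = d / 2 * (‖(Complex.exp (2 * Real.pi * Complex.I * (ℓ : ℕ) / K)
            - Complex.exp (2 * Real.pi * Complex.I * (k : ℕ) / K))‖ ^ 2
          + ‖(z - (↑d)⁻¹ * Complex.exp (2 * Real.pi * Complex.I * (k : ℕ) / K))‖ ^ 2) := by
    intro k hk
    have h2 := huff_two_point_integral (α k) (hmeas k) _ _ g (hval k hk) (hprob k hk)
    have hga : g ((d : ℂ) * Complex.exp (2 * Real.pi * Complex.I * (k : ℕ) / K))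
        = d * ‖(Complex.exp (2 * Real.pi * Complex.I * (ℓ : ℕ) / K)
            - Complex.exp (2 * Real.pi * Complex.I * (k : ℕ) / K))‖ ^ 2 := by
      simp only [hgdef]
      rw [show z - (d : ℂ) * Complex.exp (2 * Real.pi * Complex.I * (k : ℕ) / K)
          = (d : ℂ) * (Complex.exp (2 * Real.pi * Complex.I * (ℓ : ℕ) / K)
              - Complex.exp (2 * Real.pi * Complex.I * (k : ℕ) / K)) by rw [hz]; ring]
      rw [norm_mul, norm_mul, hEabs, mul_one, Complex.norm_real, Real.norm_eq_abs, abs_of_pos hd0]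
      field_simp [hd0.ne']
    have hgb : g ((↑d)⁻¹ * Complex.exp (2 * Real.pi * Complex.I * (k : ℕ) / K))
        = ‖(z - (↑d)⁻¹
            * Complex.exp (2 * Real.pi * Complex.I * (k : ℕ) / K))‖ ^ 2 * d := by
      simp only [hgdef]
      rw [norm_mul, norm_inv, Complex.norm_real, Real.norm_eq_abs, abs_of_pos hd0, hEabs, mul_one, div_eq_mul_inv, inv_inv]
    simp only [hfdef]
    rw [h2, hga, hgb]
    ring
  rw [← Finset.mul_prod_erase univ (fun k => ∫ ω, f k ω) (mem_univ ℓ), hIl]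
  have herase : ∏ k ∈ univ.erase ℓ, ∫ ω, f k ω = ∏ n ∈ Finset.Ico 1 K, (d / 2 *
      ((‖(1 - Complex.exp (2 * Real.pi * Complex.I * (n : ℕ) / K))‖) ^ 2
        + (‖((d : ℂ)
            - (↑d)⁻¹ * Complex.exp (2 * Real.pi * Complex.I * (n : ℕ) / K))‖) ^ 2)) := by
    refine Finset.prod_bij' (fun k _ => ((k - ℓ : Fin K) : ℕ)) (fun n _ => ℓ + (n : Fin K))
      ?_ ?_ ?_ ?_ ?_
    · intro k hk
      rw [Finset.mem_Ico]
      refine ⟨Nat.one_le_iff_ne_zero.mpr ?_, Fin.is_lt _⟩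
      intro h0
      apply (Finset.mem_erase.mp hk).1
      have h1 : k - ℓ = 0 := Fin.ext (by simpa using h0)
      have h2 := congrArg (· + ℓ) h1
      simpa using h2
    · intro n hn
      rw [Finset.mem_Ico] at hn
      rw [Finset.mem_erase]
      refine ⟨?_, Finset.mem_univ _⟩
      intro h0
      have h1 : (n : Fin K) = 0 := by
        have := congrArg (fun x => x - ℓ) h0
        simpa using this
      have h2 : n % K = 0 := by
        have := congrArg Fin.val h1
        simpa [Fin.val_natCast] using this
      rw [Nat.mod_eq_of_lt hn.2] at h2
      omega
    · intro k hk
      simp only [Fin.cast_val_eq_self]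
      ring
    · intro n hn
      rw [Finset.mem_Ico] at hn
      show ((ℓ + (n : Fin K) - ℓ : Fin K) : ℕ) = n
      rw [show ℓ + (n : Fin K) - ℓ = (n : Fin K) by ring, Fin.val_natCast]
      exact Nat.mod_eq_of_lt hn.2
    · intro k hk
      rw [hIk k (Finset.mem_erase.mp hk).1]
      have hkval : (k : ℕ) = ((ℓ : ℕ) + ((k - ℓ : Fin K) : ℕ)) % K := by
        conv_lhs => rw [show k = ℓ + (k - ℓ) by ring]
        rw [Fin.val_add]
      have hEk : Complex.exp (2 * Real.pi * Complex.I * ((k : ℕ) : ℂ) / K)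
          = Complex.exp (2 * Real.pi * Complex.I * ((ℓ : ℕ) : ℂ) / K)
            * Complex.exp (2 * Real.pi * Complex.I * (((k - ℓ : Fin K) : ℕ) : ℂ) / K) := by
        rw [hkval, huff_exp_mod K _ hK0, huff_exp_add K _ _ hK0]
      rw [hEk]
      have h5 : ‖(Complex.exp (2 * Real.pi * Complex.I * ((ℓ : ℕ) : ℂ) / K)
            - Complex.exp (2 * Real.pi * Complex.I * ((ℓ : ℕ) : ℂ) / K)
              * Complex.exp (2 * Real.pi * Complex.I * (((k - ℓ : Fin K) : ℕ) : ℂ) / K))‖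
          = ‖(1 - Complex.exp
              (2 * Real.pi * Complex.I * (((k - ℓ : Fin K) : ℕ) : ℂ) / K))‖ := by
        rw [show Complex.exp (2 * Real.pi * Complex.I * ((ℓ : ℕ) : ℂ) / K)
              - Complex.exp (2 * Real.pi * Complex.I * ((ℓ : ℕ) : ℂ) / K)
                * Complex.exp (2 * Real.pi * Complex.I * (((k - ℓ : Fin K) : ℕ) : ℂ) / K)
            = Complex.exp (2 * Real.pi * Complex.I * ((ℓ : ℕ) : ℂ) / K)
              * (1 - Complex.exp (2 * Real.pi * Complex.I * (((k - ℓ : Fin K) : ℕ) : ℂ) / K))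
          by ring, norm_mul, hEabs, one_mul]
      have h6 : ‖(z - (↑d)⁻¹
            * (Complex.exp (2 * Real.pi * Complex.I * ((ℓ : ℕ) : ℂ) / K)
              * Complex.exp (2 * Real.pi * Complex.I * (((k - ℓ : Fin K) : ℕ) : ℂ) / K)))‖
          = ‖((d : ℂ) - (↑d)⁻¹ * Complex.exp
              (2 * Real.pi * Complex.I * (((k - ℓ : Fin K) : ℕ) : ℂ) / K))‖ := by
        rw [hz, show (d : ℂ) * Complex.exp (2 * Real.pi * Complex.I * ((ℓ : ℕ) : ℂ) / K)
              - (↑d)⁻¹ * (Complex.exp (2 * Real.pi * Complex.I * ((ℓ : ℕ) : ℂ) / K)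
                * Complex.exp (2 * Real.pi * Complex.I * (((k - ℓ : Fin K) : ℕ) : ℂ) / K))
            = Complex.exp (2 * Real.pi * Complex.I * ((ℓ : ℕ) : ℂ) / K)
              * ((d : ℂ) - (↑d)⁻¹ * Complex.exp
                  (2 * Real.pi * Complex.I * (((k - ℓ : Fin K) : ℕ) : ℂ) / K))
          by ring, norm_mul, hEabs, one_mul]
      rw [h5, h6]
  rw [herase, Finset.prod_mul_distrib, Finset.prod_const, Nat.card_Ico]
  have hdK : (d : ℝ) ^ K = d * d ^ (K - 1) := by
    conv_lhs => rw [show K = (K - 1) + 1 by omega]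
    rw [pow_succ]; ring
  have key : ∀ P : ℝ, η * (↑K + 1) * ((d - d⁻¹) ^ 2 * d * ((d / 2) ^ (K - 1) * P))
      = η * (↑K + 1) * (d - d⁻¹) ^ 2 * d ^ K * (1 / 2 ^ (K - 1)) * P := by
    intro P
    rw [hdK, div_pow, one_div]
    ring
  exact key _
end

section
/- Fix K ≥ 2, real d > 1, η = 1/(d^K + d^{-K}), and indices ℓ, l ∈ {0,...,K-1}. Let α_l = d^{-1}·e^{2πil/K} and α_k = d·e^{2πik/K} for all k ≠ l, and X(z) = x_K ∏_k(z - α_k) with x_K = sqrt(η(K+1)/∏_k|α_k|). Then |X(d·e^{2πil/K})|² = η(K+1)(d - d^{-1})²·d^K·K². -/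
open Complex Finset

lemma aux_prod_erase_zero (n : ℕ) (ω : ℂ) (hω : IsPrimitiveRoot ω (n+1)) :
    ∏ j ∈ univ.erase (0 : Fin (n+1)), (1 - ω ^ (j : ℕ)) = (n+1 : ℂ) := by
  have e : (∏ j ∈ univ.erase (0 : Fin (n+1)), (1 - ω ^ (j : ℕ)))
      = ∏ i ∈ range n, (1 - ω ^ (i+1)) := by
    refine Finset.prod_nbij' (fun j => (j : ℕ) - 1)
      (fun i => (⟨(i+1) % (n+1), Nat.mod_lt _ (by omega)⟩ : Fin (n+1))) ?_ ?_ ?_ ?_ ?_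
    · intro a ha
      simp only [mem_erase, mem_univ, and_true] at ha
      have h1 : (a : ℕ) < n + 1 := a.isLt
      have h2 : (a : ℕ) ≠ 0 := fun h => ha (Fin.ext h)
      simp only [mem_range]; omega
    · intro a ha
      simp only [mem_range] at ha
      simp only [mem_erase, mem_univ, and_true]
      intro h
      have := Fin.mk.injEq .. ▸ h
      rw [Fin.ext_iff] at h
      simp [Nat.mod_eq_of_lt (by omega : a + 1 < n + 1)] at h
    · intro a ha
      simp only [mem_erase, mem_univ, and_true] at ha
      have h2 : (a : ℕ) ≠ 0 := fun h => ha (Fin.ext h)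
      have h1 : (a : ℕ) < n + 1 := a.isLt
      apply Fin.ext
      simp [Nat.mod_eq_of_lt (by omega : (a:ℕ) - 1 + 1 < n + 1)]
      omega
    · intro a ha
      simp only [mem_range] at ha
      simp [Nat.mod_eq_of_lt (by omega : a + 1 < n + 1)]
    · intro a ha
      simp only [mem_erase, mem_univ, and_true] at ha
      have h2 : (a : ℕ) ≠ 0 := fun h => ha (Fin.ext h)
      have h1 : (a : ℕ) < n + 1 := a.isLt
      congr 2
      omega
  rw [e]
  have := hω.prod_one_sub_pow_eq_order
  push_cast at this ⊢
  exact this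

lemma aux_prod_shift (n : ℕ) (ω : ℂ) (l : Fin (n+1)) :
    ∏ k ∈ univ.erase l, (1 - ω ^ ((k - l : Fin (n+1)) : ℕ))
      = ∏ j ∈ univ.erase (0 : Fin (n+1)), (1 - ω ^ (j : ℕ)) := by
  refine Finset.prod_nbij' (fun k => k - l) (fun j => j + l) ?_ ?_ ?_ ?_ ?_
  · intro a ha
    simp only [mem_erase, mem_univ, and_true] at ha ⊢
    exact sub_ne_zero_of_ne ha
  · intro a ha
    simp only [mem_erase, mem_univ, and_true] at ha ⊢
    intro h; apply ha; rwa [← add_left_inj l, zero_add]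
  · intro a _; exact sub_add_cancel a l
  · intro a _; exact add_sub_cancel_right a l
  · intro a _; rfl

lemma aux_pow_add (K : ℕ) (hK : 0 < K) (ω : ℂ) (hω : ω ^ K = 1) (a b : Fin K) :
    ω ^ ((a + b : Fin K) : ℕ) = ω ^ (a : ℕ) * ω ^ (b : ℕ) := by
  have : ((a + b : Fin K) : ℕ) = ((a : ℕ) + (b : ℕ)) % K := by
    haveI : NeZero K := ⟨hK.ne'⟩
    simp [Fin.add_def]
  rw [this, ← pow_eq_pow_mod _ hω, pow_add]

theorem sq_abs_huffman_eval_index_encoding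
    (K : ℕ) (hK : 2 ≤ K) (d : ℝ) (hd : 1 < d)
    (η : ℝ) (hη : η = (d ^ K + d⁻¹ ^ K)⁻¹)
    (l : Fin K) (α : Fin K → ℂ)
    (hαl : α l = (d⁻¹ : ℂ) * Complex.exp (2 * Real.pi * Complex.I * (l : ℕ) / K))
    (hα : ∀ k : Fin K, k ≠ l →
      α k = (d : ℂ) * Complex.exp (2 * Real.pi * Complex.I * (k : ℕ) / K)) :
    (Real.sqrt (η * (K + 1) / ∏ k : Fin K, ‖α k‖)
        * ‖∏ k : Fin K,
            ((d : ℂ) * Complex.exp (2 * Real.pi * Complex.I * (l : ℕ) / K) - α k)‖) ^ 2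
      = η * (K + 1) * (d - d⁻¹) ^ 2 * d ^ K * (K : ℝ) ^ 2 := by
  obtain ⟨n, rfl⟩ : ∃ n, K = n + 1 := ⟨K - 1, by omega⟩
  have hd0 : (0:ℝ) < d := lt_trans one_pos hd
  have hdne : (d:ℂ) ≠ 0 := by exact_mod_cast hd0.ne'
  set ω : ℂ := Complex.exp (2 * Real.pi * Complex.I / ((n+1 : ℕ) : ℂ)) with hωdef
  have hω : IsPrimitiveRoot ω (n+1) := Complex.isPrimitiveRoot_exp (n+1) (by omega)
  have hω1 : ω ^ (n+1) = 1 := hω.pow_eq_one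
  have hexp : ∀ k : Fin (n+1),
      Complex.exp (2 * Real.pi * Complex.I * (k : ℕ) / ((n+1 : ℕ) : ℂ)) = ω ^ (k : ℕ) := by
    intro k
    rw [hωdef, ← Complex.exp_nat_mul]
    ring_nf
  have habsω : ∀ m : ℕ, ‖ω ^ m‖ = 1 := by
    intro m
    rw [norm_pow, hωdef, show (2 * (Real.pi : ℂ) * Complex.I / ((n+1 : ℕ) : ℂ))
        = ((2 * Real.pi / (n+1 : ℕ) : ℝ) : ℂ) * Complex.I by push_cast; ring,
      Complex.norm_exp_ofReal_mul_I, one_pow]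
  have habsαl : ‖α l‖ = d⁻¹ := by
    rw [hαl, hexp, norm_mul, habsω, mul_one, norm_inv, Complex.norm_real, Real.norm_eq_abs, abs_of_pos hd0]
  have habsαk : ∀ k ∈ univ.erase l, ‖α k‖ = d := by
    intro k hk
    rw [hα k (mem_erase.1 hk).1, hexp, norm_mul, habsω, mul_one, Complex.norm_real, Real.norm_eq_abs,
      abs_of_pos hd0]
  have hcard : (univ.erase l).card = n := by simp
  have hA : ∏ k : Fin (n+1), ‖α k‖ = d⁻¹ * d ^ n := by
    rw [← Finset.mul_prod_erase _ _ (mem_univ l), habsαl, Finset.prod_congr rfl habsαk,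
      prod_const, hcard]
  have hsplit : ∀ k : Fin (n+1), ω ^ (k : ℕ) = ω ^ (l : ℕ) * ω ^ ((k - l : Fin (n+1)) : ℕ) := by
    intro k
    rw [← aux_pow_add (n+1) (by omega) ω hω1, add_sub_cancel]
  have hP : (∏ k : Fin (n+1),
        ((d : ℂ) * Complex.exp (2 * Real.pi * Complex.I * (l : ℕ) / ((n+1 : ℕ) : ℂ)) - α k))
      = ((d : ℂ) - (d : ℂ)⁻¹) * ω ^ (l : ℕ) * ((d : ℂ) * ω ^ (l : ℕ)) ^ n * ((n+1 : ℕ) : ℂ) := by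
    rw [← Finset.mul_prod_erase _ _ (mem_univ l), hαl, hexp]
    have h1 : (∏ k ∈ univ.erase l,
        ((d : ℂ) * ω ^ (l : ℕ) - α k))
        = ((d : ℂ) * ω ^ (l : ℕ)) ^ n
            * ∏ k ∈ univ.erase l, (1 - ω ^ ((k - l : Fin (n+1)) : ℕ)) := by
      calc (∏ k ∈ univ.erase l, ((d : ℂ) * ω ^ (l : ℕ) - α k))
          = ∏ k ∈ univ.erase l,
              (((d : ℂ) * ω ^ (l : ℕ)) * (1 - ω ^ ((k - l : Fin (n+1)) : ℕ))) := by
            refine Finset.prod_congr rfl fun k hk => ?_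
            rw [hα k (mem_erase.1 hk).1, hexp, hsplit k]
            ring
        _ = (∏ _k ∈ univ.erase l, ((d : ℂ) * ω ^ (l : ℕ)))
              * ∏ k ∈ univ.erase l, (1 - ω ^ ((k - l : Fin (n+1)) : ℕ)) := prod_mul_distrib
        _ = _ := by rw [prod_const, hcard]
    rw [h1, aux_prod_shift n ω l, aux_prod_erase_zero n ω hω]
    push_cast
    ring
  have hBabs : ‖∏ k : Fin (n+1),
      ((d : ℂ) * Complex.exp (2 * Real.pi * Complex.I * (l : ℕ) / ((n+1 : ℕ) : ℂ)) - α k)‖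
      = (d - d⁻¹) * d ^ n * (n+1 : ℕ) := by
    rw [hP]
    rw [show ((d : ℂ) - (d : ℂ)⁻¹) = ((d - d⁻¹ : ℝ) : ℂ) by push_cast; ring]
    simp only [norm_mul, norm_pow, Complex.norm_real, Real.norm_eq_abs, Complex.norm_natCast, habsω]
    have hsub : 0 < d - d⁻¹ := by
      have : d⁻¹ < 1 := inv_lt_one_of_one_lt₀ hd
      linarith
    rw [abs_of_pos hsub, abs_of_pos hd0]
    ring
  have hη0 : 0 < η := by rw [hη]; positivity
  have hQ0 : 0 ≤ η * ((n+1 : ℕ) + 1) / ∏ k : Fin (n+1), ‖α k‖ := by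
    rw [hA]; positivity
  rw [mul_pow, Real.sq_sqrt hQ0, hBabs, hA]
  have hdKn : d ^ (n+1) = d ^ n * d := by rw [pow_succ]
  rw [hdKn]
  have hdn : d ^ n ≠ 0 := pow_ne_zero _ hd0.ne'
  field_simp
end
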